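/- Let O be a valuation ring with maximal ideal m and residue field k = O/m. Let B = O[X₁,…,X_d] be the polynomial ring over O, let p ⊆ B be the prime ideal of polynomials all of whose coefficients lie in m, and let B_p be the localization of B at p. Then for every element x of B_p there exists an element a ∈ O such that x·B_p = a·B_p as ideals of B_p. (That is, the valuation ring B_p is unramified over O: it has the same value group as O.) -/

import Mathlib

theorem exists_dvd_all_aux {O : Type} [CommRing O] [IsDomain O] [ValuationRing O]
    {ι : Type*} (s : Finset ι) (c : ι → O) (hs : s.Nonempty) :
    ∃ i ∈ s, ∀ j ∈ s, c i ∣ c j := by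
  classical
  induction s using Finset.cons_induction with
  | empty => simp at hs
  | cons i s hi ih =>
    rcases s.eq_empty_or_nonempty with rfl | hne
    · exact ⟨i, by simp, by simp⟩
    · obtain ⟨j, hj, hdvd⟩ := ih hne
      rcases ValuationRing.dvd_total (c i) (c j) with h | h
      · refine ⟨i, Finset.mem_cons_self _ _, fun k hk => ?_⟩
        rcases Finset.mem_cons.1 hk with rfl | hk
        · exact dvd_rfl
        · exact h.trans (hdvd k hk)
      · refine ⟨j, Finset.mem_cons_of_mem hj, fun k hk => ?_⟩
        rcases Finset.mem_cons.1 hk with rfl | hk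
        · exact h
        · exact hdvd k hk

/-- Let `O` be a valuation ring with maximal ideal `m`, let
`(MvPolynomial (Fin d) O) = O[X₁,…,X_d]`, let `p ⊆ (MvPolynomial (Fin d) O)` be the prime ideal of polynomials all of whose
coefficients lie in `m`, and let `B_p` be the localization of `(MvPolynomial (Fin d) O)` at `p`.  Then every
element of `B_p` generates the same ideal as (the image of) some element `a` of `O`:
the valuation ring `B_p` is unramified over `O`, i.e. has the same value group. -/
theorem localization_at_gauss_prime_unramified
    (O : Type) [CommRing O] [IsDomain O] [ValuationRing O]
    (d : ℕ) (p : Ideal (MvPolynomial (Fin d) O))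
    (hpdef : ∀ f : MvPolynomial (Fin d) O,
      f ∈ p ↔ ∀ m : Fin d →₀ ℕ, MvPolynomial.coeff m f ∈ IsLocalRing.maximalIdeal O)
    (hp : p.IsPrime) :
    ∀ x : Localization.AtPrime p, ∃ a : O,
      Ideal.span {x} =
        Ideal.span {algebraMap (MvPolynomial (Fin d) O) (Localization.AtPrime p)
          (MvPolynomial.C a)} := by
  classical
  intro x
  obtain ⟨⟨f, s⟩, hx⟩ := IsLocalization.mk'_surjective p.primeCompl x
  rw [← hx]
  have hassoc1 : Associated (IsLocalization.mk' (Localization.AtPrime p) f s) (algebraMap (MvPolynomial (Fin d) O) (Localization.AtPrime p) f) := by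
    refine ⟨(IsLocalization.map_units (Localization.AtPrime p) s).unit, ?_⟩
    simpa using IsLocalization.mk'_spec (Localization.AtPrime p) f s
  by_cases hf : f = 0
  · refine ⟨0, ?_⟩
    rw [Ideal.span_singleton_eq_span_singleton]
    subst hf
    simpa using hassoc1
  · obtain ⟨m0, hm0, hdvd⟩ := exists_dvd_all_aux f.support (fun m => MvPolynomial.coeff m f)
      (MvPolynomial.support_nonempty.2 hf)
    set a := MvPolynomial.coeff m0 f with ha
    have ha0 : a ≠ 0 := by
      simpa [a, MvPolynomial.mem_support_iff] using hm0
    have hCdvd : (MvPolynomial.C a : (MvPolynomial (Fin d) O)) ∣ f := by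
      rw [MvPolynomial.C_dvd_iff_dvd_coeff]
      intro i
      by_cases hi : i ∈ f.support
      · exact hdvd i hi
      · simp [MvPolynomial.notMem_support_iff.1 hi]
    obtain ⟨g, hg⟩ := hCdvd
    have hg1 : MvPolynomial.coeff m0 g = 1 := by
      have h1 : a = a * MvPolynomial.coeff m0 g := by
        conv_lhs => rw [ha, hg]
        simp [MvPolynomial.coeff_C_mul]
      exact (mul_left_cancel₀ ha0 (by rw [← h1, mul_one])).symm
    have hgp : g ∉ p := by
      intro h
      have h2 := (hpdef g).1 h m0
      rw [hg1] at h2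
      exact (IsLocalRing.maximalIdeal.isMaximal O).ne_top
        (Ideal.eq_top_of_isUnit_mem _ h2 isUnit_one)
    have hgu : IsUnit (algebraMap (MvPolynomial (Fin d) O) (Localization.AtPrime p) g) :=
      IsLocalization.map_units (Localization.AtPrime p) (⟨g, hgp⟩ : p.primeCompl)
    refine ⟨a, ?_⟩
    rw [Ideal.span_singleton_eq_span_singleton]
    refine hassoc1.trans ?_
    refine Associated.symm ⟨hgu.unit, ?_⟩
    rw [hg]
    simp [mul_comm]
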